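/- For every c ∈ ℂ∖{0} and every x ∈ [1,L−1], the kink state satisfies h_{x,x+1} φ_c = 0. Consequently H_0 φ_c = 0, and since H_0 ≥ 0, the lowest eigenvalue of H_0 is 0 and φ_c is a ground state of H_0. -/

import Mathlib

open Matrix Finset
open scoped ComplexOrder

noncomputable section

/-- Configuration space of a chain of `L` spins-1/2: `ℋ_L = ⊗_{x=1}^L ℂ²`
is identified with functions `Conf L → ℂ`. -/
abbrev Conf (L : ℕ) := Fin L → Fin 2

def S1 : Matrix (Fin 2) (Fin 2) ℂ := !![0, 1/2; 1/2, 0]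
def S2 : Matrix (Fin 2) (Fin 2) ℂ := !![0, -Complex.I/2; Complex.I/2, 0]
def S3 : Matrix (Fin 2) (Fin 2) ℂ := !![1/2, 0; 0, -1/2]

/-- The one-site operator `A` acting on the `x`-th (0-based) tensor factor of `ℋ_L`. -/
def siteOp (L : ℕ) (A : Matrix (Fin 2) (Fin 2) ℂ) (x : ℕ) :
    Matrix (Conf L) (Conf L) ℂ :=
  fun m n =>
    if hx : x < L then
      A (m ⟨x, hx⟩) (n ⟨x, hx⟩) *
        ∏ y ∈ Finset.univ.erase (⟨x, hx⟩ : Fin L), (if m y = n y then 1 else 0)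
    else 0

def q (Δ : ℝ) : ℝ := Δ - Real.sqrt (Δ ^ 2 - 1)

/-- The bond interaction `h_{x,x+1}` (with `x` 0-based). -/
def hBond (L : ℕ) (Δ : ℝ) (x : ℕ) : Matrix (Conf L) (Conf L) ℂ :=
  (-(Δ⁻¹ : ℝ) : ℂ) • (siteOp L S1 x * siteOp L S1 (x + 1) + siteOp L S2 x * siteOp L S2 (x + 1))
    - siteOp L S3 x * siteOp L S3 (x + 1)
    + ((1 / 2 * Real.sqrt (1 - Δ⁻¹ ^ 2) : ℝ) : ℂ) • (siteOp L S3 x - siteOp L S3 (x + 1))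
    + ((1 / 4 : ℝ) : ℂ) • 1

/-- The XXZ kink Hamiltonian `H_0 = ∑_{x=1}^{L-1} h_{x,x+1}`. -/
def H0 (L : ℕ) (Δ : ℝ) : Matrix (Conf L) (Conf L) ℂ :=
  ∑ x ∈ Finset.range (L - 1), hBond L Δ x

/-- The kink state `φ_c` (0-based site `x` corresponds to the paper's site `x+1`). -/
def kink (L : ℕ) (Δ : ℝ) (c : ℂ) : Conf L → ℂ :=
  fun m => ∏ x : Fin L,
    (((1 + ‖c‖ ^ 2 * q Δ ^ (2 * (x.1 + 1))) ^ (-(1 / 2 : ℝ)) : ℝ) : ℂ) *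
      (if m x = 0 then 1 else c * (q Δ : ℂ) ^ (x.1 + 1))

/-- The set of (real) eigenvalues of a matrix. -/
def eigSet {n : Type*} [Fintype n] [DecidableEq n] (H : Matrix n n ℂ) : Set ℝ :=
  {μ : ℝ | ∃ ψ : n → ℂ, ψ ≠ 0 ∧ H.mulVec ψ = (μ : ℂ) • ψ}

/-- Euclidean norm of `𝐁(x) ∈ ℝ³`. -/
def bnorm (b : Fin 3 → ℝ) : ℝ := Real.sqrt (b 0 ^ 2 + b 1 ^ 2 + b 2 ^ 2)

/-- The magnetic field term `𝐁(x)·𝐒_x` at (0-based) site `x`. -/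
def fieldOp (L : ℕ) (b : Fin 3 → ℝ) (x : ℕ) : Matrix (Conf L) (Conf L) ℂ :=
  (b 0 : ℂ) • siteOp L S1 x + (b 1 : ℂ) • siteOp L S2 x + (b 2 : ℂ) • siteOp L S3 x

/-! ### Auxiliary development -/

namespace XXZAux

variable {L : ℕ} {Δ : ℝ}

/-! #### Real scalar identities -/

def av (Δ : ℝ) : ℝ := Real.sqrt ((1 + Real.sqrt (1 - Δ⁻¹ ^ 2)) / 2)
def bv (Δ : ℝ) : ℝ := Real.sqrt ((1 - Real.sqrt (1 - Δ⁻¹ ^ 2)) / 2)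

lemma hΔ0 (hΔ : 1 < Δ) : 0 < Δ := lt_trans one_pos hΔ

lemma sq_sub_nonneg (hΔ : 1 < Δ) : 0 ≤ Δ ^ 2 - 1 := by nlinarith

lemma hs_sq (hΔ : 1 < Δ) : Real.sqrt (Δ ^ 2 - 1) ^ 2 = Δ ^ 2 - 1 :=
  Real.sq_sqrt (sq_sub_nonneg hΔ)

lemma hq_pos (hΔ : 1 < Δ) : 0 < q Δ := by
  have h : Real.sqrt (Δ ^ 2 - 1) < Δ := by
    have h2 : Real.sqrt (Δ ^ 2 - 1) < Real.sqrt (Δ ^ 2) :=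
      Real.sqrt_lt_sqrt (sq_sub_nonneg hΔ) (by nlinarith)
    rwa [Real.sqrt_sq (hΔ0 hΔ).le] at h2
  simpa [q] using sub_pos.mpr h

lemma hinv_nonneg (hΔ : 1 < Δ) : 0 ≤ 1 - Δ⁻¹ ^ 2 := by
  have h1 : Δ⁻¹ < 1 := by
    rw [inv_lt_one_iff₀]; right; exact hΔ
  have h0 : 0 < Δ⁻¹ := inv_pos.mpr (hΔ0 hΔ)
  nlinarith

lemma hA_le_one (hΔ : 1 < Δ) : Real.sqrt (1 - Δ⁻¹ ^ 2) ≤ 1 :=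
  Real.sqrt_le_one.mpr (by nlinarith [hinv_nonneg hΔ, sq_nonneg (Δ⁻¹)])

lemma hA_sq (hΔ : 1 < Δ) : Real.sqrt (1 - Δ⁻¹ ^ 2) ^ 2 = 1 - Δ⁻¹ ^ 2 :=
  Real.sq_sqrt (hinv_nonneg hΔ)

lemma hA_eq (hΔ : 1 < Δ) : Real.sqrt (1 - Δ⁻¹ ^ 2) = Real.sqrt (Δ ^ 2 - 1) / Δ := by
  rw [show 1 - Δ⁻¹ ^ 2 = (Δ ^ 2 - 1) / Δ ^ 2 by field_simp,
    Real.sqrt_div (sq_sub_nonneg hΔ), Real.sqrt_sq (hΔ0 hΔ).le]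

lemma av_nonneg : 0 ≤ av Δ := Real.sqrt_nonneg _
lemma bv_nonneg : 0 ≤ bv Δ := Real.sqrt_nonneg _

lemma av_sq (hΔ : 1 < Δ) : av Δ * av Δ = (1 + Real.sqrt (1 - Δ⁻¹ ^ 2)) / 2 :=
  Real.mul_self_sqrt (by nlinarith [Real.sqrt_nonneg (1 - Δ⁻¹ ^ 2)])

lemma bv_sq (hΔ : 1 < Δ) : bv Δ * bv Δ = (1 - Real.sqrt (1 - Δ⁻¹ ^ 2)) / 2 :=
  Real.mul_self_sqrt (by nlinarith [hA_le_one hΔ])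

lemma av_mul_bv (hΔ : 1 < Δ) : av Δ * bv Δ = 1 / (2 * Δ) := by
  rw [av, bv, ← Real.sqrt_mul (by nlinarith [Real.sqrt_nonneg (1 - Δ⁻¹ ^ 2)])]
  rw [show (1 + Real.sqrt (1 - Δ⁻¹ ^ 2)) / 2 * ((1 - Real.sqrt (1 - Δ⁻¹ ^ 2)) / 2)
      = (1 - Real.sqrt (1 - Δ⁻¹ ^ 2) ^ 2) / 4 by ring, hA_sq hΔ]
  rw [show (1 - (1 - Δ⁻¹ ^ 2)) / 4 = (1 / (2 * Δ)) ^ 2 by field_simp; ring]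
  exact Real.sqrt_sq (by positivity)

lemma av_mul_q (hΔ : 1 < Δ) : av Δ * q Δ = bv Δ := by
  have h1 : (av Δ * q Δ) ^ 2 = bv Δ ^ 2 := by
    have hs2 := hs_sq hΔ
    have hΔ0 := hΔ0 hΔ
    have hq : q Δ = Δ - Real.sqrt (Δ ^ 2 - 1) := rfl
    have ha := av_sq hΔ
    have hb := bv_sq hΔ
    have hA := hA_eq hΔ
    rw [mul_pow, show av Δ ^ 2 = av Δ * av Δ by ring, ha,
      show bv Δ ^ 2 = bv Δ * bv Δ by ring, hb, hA, hq]
    field_simp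
    nlinarith [hs2]
  have h2 : 0 ≤ av Δ * q Δ := mul_nonneg av_nonneg (hq_pos hΔ).le
  nlinarith [h1, h2, bv_nonneg (Δ := Δ)]

/-! #### Combinatorics of sums over configurations -/

def del (m n : Conf L) (s : Finset (Fin L)) : ℂ := ∏ y ∈ s, (if m y = n y then 1 else 0)

lemma sum_pi (F : Fin L → Fin 2 → ℂ) :
    ∑ k : Conf L, ∏ y : Fin L, F y (k y) = ∏ y : Fin L, ∑ v : Fin 2, F y v := by
  rw [Finset.prod_univ_sum, Fintype.piFinset_univ]

lemma prod_split (i j : Fin L) (hij : i ≠ j) (f : Fin L → ℂ) :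
    ∏ y : Fin L, f y = f i * (f j * ∏ y ∈ (univ.erase i).erase j, f y) := by
  rw [Finset.mul_prod_erase (univ.erase i) f (a := j) (by simp [Ne.symm hij]),
    Finset.mul_prod_erase univ f (Finset.mem_univ i)]

lemma erase_comm' (s : Finset (Fin L)) (a b : Fin L) :
    (s.erase a).erase b = (s.erase b).erase a := by
  ext x; simp [and_left_comm, and_comm]

lemma sum_two (i j : Fin L) (hij : i ≠ j) (G : Fin 2 → Fin 2 → ℂ) (H : Fin L → Fin 2 → ℂ) :
    ∑ k : Conf L, G (k i) (k j) * ∏ y ∈ (univ.erase i).erase j, H y (k y)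
      = (∑ a : Fin 2, ∑ b : Fin 2, G a b) * ∏ y ∈ (univ.erase i).erase j, ∑ v : Fin 2, H y v := by
  set E := (univ.erase i).erase j with hE
  have key : ∀ a b : Fin 2,
      ∑ k : Conf L, ((if k i = a then (1:ℂ) else 0) * (if k j = b then 1 else 0))
        * ∏ y ∈ E, H y (k y)
      = ∏ y ∈ E, ∑ v : Fin 2, H y v := by
    intro a b
    have hF : ∀ k : Conf L,
        ((if k i = a then (1:ℂ) else 0) * (if k j = b then 1 else 0))
          * ∏ y ∈ E, H y (k y)
        = ∏ y : Fin L, (fun y v => if y = i then (if v = a then (1:ℂ) else 0)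
            else if y = j then (if v = b then 1 else 0) else H y v) y (k y) := by
      intro k
      rw [prod_split i j hij]
      have e1 : (fun (y : Fin L) (v : Fin 2) => if y = i then (if v = a then (1:ℂ) else 0)
            else if y = j then (if v = b then 1 else 0) else H y v) i (k i)
          = (if k i = a then (1:ℂ) else 0) := by simp
      have e2 : (fun (y : Fin L) (v : Fin 2) => if y = i then (if v = a then (1:ℂ) else 0)
            else if y = j then (if v = b then 1 else 0) else H y v) j (k j)
          = (if k j = b then (1:ℂ) else 0) := by simp [Ne.symm hij]
      have e3 : ∏ y ∈ E, (fun (y : Fin L) (v : Fin 2) => if y = i then (if v = a then (1:ℂ) else 0)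
            else if y = j then (if v = b then 1 else 0) else H y v) y (k y)
          = ∏ y ∈ E, H y (k y) := by
        apply Finset.prod_congr rfl
        intro y hy
        rw [hE] at hy
        simp only [Finset.mem_erase, Finset.mem_univ] at hy
        simp [hy.1, hy.2]
      rw [e1, e2, e3, mul_assoc]
    have hs := sum_pi (L := L) (fun y v => if y = i then (if v = a then (1:ℂ) else 0)
            else if y = j then (if v = b then 1 else 0) else H y v)
    simp_rw [hF]
    rw [hs]
    rw [prod_split i j hij]
    have e1 : (∑ v : Fin 2, (fun (y : Fin L) (v : Fin 2) => if y = i then (if v = a then (1:ℂ) else 0)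
          else if y = j then (if v = b then 1 else 0) else H y v) i v) = 1 := by simp
    have e2 : (∑ v : Fin 2, (fun (y : Fin L) (v : Fin 2) => if y = i then (if v = a then (1:ℂ) else 0)
          else if y = j then (if v = b then 1 else 0) else H y v) j v) = 1 := by simp [Ne.symm hij]
    have e3 : ∏ y ∈ E, (∑ v : Fin 2, (fun (y : Fin L) (v : Fin 2) => if y = i then (if v = a then (1:ℂ) else 0)
          else if y = j then (if v = b then 1 else 0) else H y v) y v)
        = ∏ y ∈ E, ∑ v : Fin 2, H y v := by
      apply Finset.prod_congr rfl
      intro y hy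
      rw [hE] at hy
      simp only [Finset.mem_erase, Finset.mem_univ] at hy
      apply Finset.sum_congr rfl
      intro v _
      simp [hy.1, hy.2]
    rw [e1, e2, e3, one_mul, one_mul]
  have expand : ∀ k : Conf L, G (k i) (k j)
      = ∑ a : Fin 2, ∑ b : Fin 2, ((if k i = a then (1:ℂ) else 0) * (if k j = b then 1 else 0)) * G a b := by
    intro k
    simp [Finset.sum_ite_eq', ite_mul]
  calc ∑ k : Conf L, G (k i) (k j) * ∏ y ∈ E, H y (k y)
      = ∑ k : Conf L, ∑ a : Fin 2, ∑ b : Fin 2,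
          G a b * (((if k i = a then (1:ℂ) else 0) * (if k j = b then 1 else 0))
            * ∏ y ∈ E, H y (k y)) := by
        apply Finset.sum_congr rfl; intro k _
        rw [expand k, Finset.sum_mul]
        apply Finset.sum_congr rfl; intro a _
        rw [Finset.sum_mul]
        apply Finset.sum_congr rfl; intro b _
        ring
    _ = ∑ a : Fin 2, ∑ b : Fin 2, G a b * ∑ k : Conf L,
          ((if k i = a then (1:ℂ) else 0) * (if k j = b then 1 else 0))
            * ∏ y ∈ E, H y (k y) := by
        rw [Finset.sum_comm]
        apply Finset.sum_congr rfl; intro a _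
        rw [Finset.sum_comm]
        apply Finset.sum_congr rfl; intro b _
        rw [Finset.mul_sum]
    _ = _ := by
        simp_rw [key]
        rw [Finset.sum_mul]
        apply Finset.sum_congr rfl; intro a _
        rw [Finset.sum_mul]

/-! #### Entry formulas -/

lemma siteOp_apply (A : Matrix (Fin 2) (Fin 2) ℂ) (i : Fin L) (m n : Conf L) :
    siteOp L A i.1 m n = A (m i) (n i) * del m n (univ.erase i) := by
  simp [siteOp, i.2, del]

lemma sum_dd (a b : Fin 2) :
    ∑ v : Fin 2, (if a = v then (1:ℂ) else 0) * (if v = b then 1 else 0)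
      = if a = b then 1 else 0 := by
  fin_cases a <;> fin_cases b <;> simp [Fin.sum_univ_two]

lemma del_erase (s : Finset (Fin L)) (j : Fin L) (hj : j ∈ s) (m n : Conf L) :
    del m n s = (if m j = n j then 1 else 0) * del m n (s.erase j) := by
  rw [del, del, ← Finset.mul_prod_erase s _ (a := j) hj]

lemma mul_entry (A B : Matrix (Fin 2) (Fin 2) ℂ) (i j : Fin L) (hij : i ≠ j) (m n : Conf L) :
    (siteOp L A i.1 * siteOp L B j.1) m n
      = (A (m i) (n i) * B (m j) (n j)) * del m n ((univ.erase i).erase j) := by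
  rw [Matrix.mul_apply]
  have hstep : ∀ k : Conf L,
      siteOp L A i.1 m k * siteOp L B j.1 k n
        = (fun a b => A (m i) a * (if a = n i then (1:ℂ) else 0)
            * ((if m j = b then (1:ℂ) else 0) * B b (n j))) (k i) (k j)
          * ∏ y ∈ (univ.erase i).erase j,
              (fun y v => (if m y = v then (1:ℂ) else 0) * (if v = n y then 1 else 0)) y (k y) := by
    intro k
    rw [siteOp_apply, siteOp_apply, del_erase (univ.erase i) j (by simp [Ne.symm hij]) m k,
      del_erase (univ.erase j) i (by simp [hij]) k n, erase_comm' _ j i]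
    simp only [del]
    rw [Finset.prod_mul_distrib]
    ring
  have hs := sum_two i j hij (fun a b => A (m i) a * (if a = n i then (1:ℂ) else 0)
            * ((if m j = b then (1:ℂ) else 0) * B b (n j)))
    (fun y v => (if m y = v then (1:ℂ) else 0) * (if v = n y then 1 else 0))
  simp_rw [hstep]
  rw [hs]
  have h1 : (∑ a : Fin 2, ∑ b : Fin 2, A (m i) a * (if a = n i then (1:ℂ) else 0)
      * ((if m j = b then (1:ℂ) else 0) * B b (n j))) = A (m i) (n i) * B (m j) (n j) := by
    rw [Finset.sum_comm]
    simp [Finset.mul_sum, Finset.sum_mul, Finset.sum_ite_eq', Finset.sum_ite_eq]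
  have h2 : ∀ y ∈ (univ.erase i).erase j,
      (∑ v : Fin 2, (if m y = v then (1:ℂ) else 0) * (if v = n y then 1 else 0))
        = if m y = n y then 1 else 0 := fun y _ => sum_dd _ _
  rw [h1, Finset.prod_congr rfl h2]
  rfl

lemma one_entry (i j : Fin L) (hij : i ≠ j) (m n : Conf L) :
    (1 : Matrix (Conf L) (Conf L) ℂ) m n
      = ((if m i = n i then (1:ℂ) else 0) * (if m j = n j then 1 else 0))
          * del m n ((univ.erase i).erase j) := by
  have base : (1 : Matrix (Conf L) (Conf L) ℂ) m n = del m n univ := by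
    rw [Matrix.one_apply]
    by_cases h : m = n
    · subst h; simp [del]
    · rw [if_neg h]
      obtain ⟨y, hy⟩ := Function.ne_iff.mp h
      exact (Finset.prod_eq_zero (Finset.mem_univ y) (by simp [hy])).symm
  rw [base, del_erase univ i (Finset.mem_univ i),
    del_erase (univ.erase i) j (by simp [Ne.symm hij]), mul_assoc]

/-! #### The rank-one structure of the bond interaction -/

def wv (Δ : ℝ) : Fin 2 → Fin 2 → ℂ := fun a b => !![0, (av Δ : ℂ); -(bv Δ : ℂ), 0] a b

lemma hBond_entry (hΔ : 1 < Δ) (i j : Fin L) (hij : (i.1 : ℕ) + 1 = j.1) (m n : Conf L) :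
    hBond L Δ i.1 m n
      = (wv Δ (m i) (m j) * (starRingEnd ℂ) (wv Δ (n i) (n j)))
          * del m n ((univ.erase i).erase j) := by
  have hΔ0 : (0:ℝ) < Δ := lt_trans one_pos hΔ
  have hne : i ≠ j := by
    intro h; subst h; omega
  have hne' : j ≠ i := hne.symm
  have hji : j ∈ univ.erase i := by simp [hne']
  have hij' : i ∈ univ.erase j := by simp [hne]
  simp only [hBond, hij, Matrix.add_apply, Matrix.sub_apply, Matrix.smul_apply, smul_eq_mul]
  rw [mul_entry S1 S1 i j hne, mul_entry S2 S2 i j hne, mul_entry S3 S3 i j hne,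
    siteOp_apply S3 i, siteOp_apply S3 j, one_entry i j hne,
    del_erase (univ.erase i) j hji, del_erase (univ.erase j) i hij', erase_comm' univ j i]
  set d := del m n ((univ.erase i).erase j) with hd
  clear_value d
  have c1 : (av Δ : ℂ) * (av Δ : ℂ) = (1 + (Real.sqrt (1 - Δ⁻¹ ^ 2) : ℂ)) / 2 := by
    rw [← Complex.ofReal_mul, av_sq hΔ]; push_cast; ring
  have c2 : (bv Δ : ℂ) * (bv Δ : ℂ) = (1 - (Real.sqrt (1 - Δ⁻¹ ^ 2) : ℂ)) / 2 := by
    rw [← Complex.ofReal_mul, bv_sq hΔ]; push_cast; ring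
  have c3 : (av Δ : ℂ) * (bv Δ : ℂ) = 1 / (2 * (Δ : ℂ)) := by
    rw [← Complex.ofReal_mul, av_mul_bv hΔ]; push_cast; ring
  have hΔC : (Δ : ℂ) ≠ 0 := by exact_mod_cast hΔ0.ne'
  generalize m i = p1 at *
  generalize m j = p2 at *
  generalize n i = q1 at *
  generalize n j = q2 at *
  fin_cases p1 <;> fin_cases p2 <;> fin_cases q1 <;> fin_cases q2 <;>
    simp [wv, S1, S2, S3] <;>
    (try simp only [show Real.sqrt (1 - (Δ ^ 2)⁻¹) = Real.sqrt (1 - Δ⁻¹ ^ 2) by rw [inv_pow]]) <;>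
    first
      | ring1
      | (right; linear_combination (d/4) * Complex.I_sq)
      | (right; linear_combination (-(d/4)) * Complex.I_sq)
      | linear_combination d * c1
      | linear_combination (-d) * c1
      | linear_combination d * c2
      | linear_combination (-d) * c2
      | linear_combination d * c3 + ((Δ:ℂ))⁻¹ * (d/4) * Complex.I_sq
      | linear_combination d * c3 - ((Δ:ℂ))⁻¹ * (d/4) * Complex.I_sq
      | linear_combination (-d) * c3 + ((Δ:ℂ))⁻¹ * (d/4) * Complex.I_sq
      | linear_combination (-d) * c3 - ((Δ:ℂ))⁻¹ * (d/4) * Complex.I_sq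
      | linear_combination (-d) * c1 + d * c3 + ((Δ:ℂ))⁻¹ * (d/4) * Complex.I_sq
      | linear_combination (-d) * c2 + d * c3 + ((Δ:ℂ))⁻¹ * (d/4) * Complex.I_sq

/-! #### The kink state as a product state -/

def gfac (Δ : ℝ) (c : ℂ) (y : Fin L) (v : Fin 2) : ℂ :=
  (((1 + ‖c‖ ^ 2 * q Δ ^ (2 * (y.1 + 1))) ^ (-(1 / 2 : ℝ)) : ℝ) : ℂ) *
    (if v = 0 then 1 else c * (q Δ : ℂ) ^ (y.1 + 1))

lemma kink_eq (c : ℂ) (m : Conf L) : kink L Δ c m = ∏ y : Fin L, gfac Δ c y (m y) := rfl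

lemma gfac_ne_zero (hΔ : 1 < Δ) (c : ℂ) (y : Fin L) : gfac Δ c y 0 ≠ 0 := by
  have hb : (0:ℝ) < 1 + ‖c‖ ^ 2 * q Δ ^ (2 * (y.1 + 1)) := by
    have h1 : 0 ≤ ‖c‖ ^ 2 * q Δ ^ (2 * (y.1 + 1)) :=
      mul_nonneg (sq_nonneg _) (pow_pos (hq_pos hΔ) _).le
    linarith
  have hpos : (0:ℝ) < (1 + ‖c‖ ^ 2 * q Δ ^ (2 * (y.1 + 1))) ^ (-(1 / 2 : ℝ)) :=
    Real.rpow_pos_of_pos hb _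
  simp only [gfac, if_pos rfl, mul_one, if_true, reduceIte]
  exact Complex.ofReal_ne_zero.mpr hpos.ne'

/-! #### Annihilation of the kink state -/

lemma hBond_mulVec_kink (hΔ : 1 < Δ) (c : ℂ) (x : ℕ) (hx : x + 1 < L) :
    (hBond L Δ x).mulVec (kink L Δ c) = 0 := by
  have hxL : x < L := by omega
  set i : Fin L := ⟨x, hxL⟩
  set j : Fin L := ⟨x + 1, hx⟩
  have hij : (i.1 : ℕ) + 1 = j.1 := rfl
  have hne : i ≠ j := by
    intro h
    have := congrArg Fin.val h
    simp [i, j] at this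
  funext m
  rw [Matrix.mulVec, Pi.zero_apply]
  show ∑ n : Conf L, hBond L Δ x m n * kink L Δ c n = 0
  have hstep : ∀ n : Conf L,
      hBond L Δ x m n * kink L Δ c n
        = (fun a b => (wv Δ (m i) (m j) * (starRingEnd ℂ) (wv Δ a b))
              * (gfac Δ c i a * gfac Δ c j b)) (n i) (n j)
          * ∏ y ∈ (univ.erase i).erase j,
              (fun y v => (if m y = v then (1:ℂ) else 0) * gfac Δ c y v) y (n y) := by
    intro n
    rw [show hBond L Δ x m n = hBond L Δ i.1 m n from rfl, hBond_entry hΔ i j hij m n,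
      kink_eq, prod_split i j hne (fun y => gfac Δ c y (n y))]
    simp only [del]
    rw [Finset.prod_mul_distrib]
    ring
  have hs := sum_two i j hne
    (fun a b => (wv Δ (m i) (m j) * (starRingEnd ℂ) (wv Δ a b))
        * (gfac Δ c i a * gfac Δ c j b))
    (fun y v => (if m y = v then (1:ℂ) else 0) * gfac Δ c y v)
  simp_rw [hstep]
  rw [hs]
  have hqC : (av Δ : ℂ) * (q Δ : ℂ) = (bv Δ : ℂ) := by
    rw [← Complex.ofReal_mul, av_mul_q hΔ]
  have w00 : wv Δ 0 0 = 0 := by simp [wv]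
  have w01 : wv Δ 0 1 = (av Δ : ℂ) := by simp [wv]
  have w10 : wv Δ 1 0 = -(bv Δ : ℂ) := by simp [wv]
  have w11 : wv Δ 1 1 = 0 := by simp [wv]
  have hT : (av Δ : ℂ) * (gfac Δ c i 0 * gfac Δ c j 1)
      - (bv Δ : ℂ) * (gfac Δ c i 1 * gfac Δ c j 0) = 0 := by
    simp only [gfac, if_pos rfl, if_neg (by decide : (1 : Fin 2) ≠ 0), mul_one, if_true, reduceIte]
    have hjv : (j.1 : ℕ) + 1 = (i.1 + 1) + 1 := by rw [← hij]
    rw [hjv]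
    linear_combination ((((1 + ‖c‖ ^ 2 * q Δ ^ (2 * (i.1 + 1))) ^ (-(1 / 2 : ℝ)) : ℝ) : ℂ)
      * (((1 + ‖c‖ ^ 2 * q Δ ^ (2 * ((i.1 + 1) + 1))) ^ (-(1 / 2 : ℝ)) : ℝ) : ℂ)
      * c * ((q Δ : ℂ)) ^ (i.1 + 1)) * hqC
  have hker : (∑ a : Fin 2, ∑ b : Fin 2, (wv Δ (m i) (m j) * (starRingEnd ℂ) (wv Δ a b))
      * (gfac Δ c i a * gfac Δ c j b)) = 0 := by
    rw [Fin.sum_univ_two, Fin.sum_univ_two, Fin.sum_univ_two, w00, w01, w10, w11]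
    simp only [map_zero, map_neg, Complex.conj_ofReal, mul_zero, zero_mul]
    linear_combination (wv Δ (m i) (m j)) * hT
  rw [hker, zero_mul]



/-! #### Positive semidefiniteness of the bond interaction -/

def Dmat (L : ℕ) (i j : Fin L) : Matrix (Conf L) (Conf L) ℂ :=
  fun m n => del m n ((univ.erase i).erase j)

lemma del_flip (m n : Conf L) (s : Finset (Fin L)) : del m n s = del n m s := by
  unfold del
  apply Finset.prod_congr rfl
  intro y _
  simp [eq_comm]

lemma del_star (m n : Conf L) (s : Finset (Fin L)) : star (del m n s) = del m n s := by
  unfold del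
  rw [show star (∏ y ∈ s, (if m y = n y then (1:ℂ) else 0))
      = ∏ y ∈ s, star (if m y = n y then (1:ℂ) else 0) from (map_prod (starRingEnd ℂ) _ s).symm ▸ rfl]
  · apply Finset.prod_congr rfl
    intro y _
    rw [apply_ite star, star_one, star_zero]

lemma Dmat_conjTranspose (i j : Fin L) : (Dmat L i j)ᴴ = Dmat L i j := by
  ext m n
  rw [Matrix.conjTranspose_apply, Dmat, Dmat, del_star, del_flip]

lemma Dmat_mul_Dmat (i j : Fin L) (hij : i ≠ j) :
    Dmat L i j * Dmat L i j = (4 : ℂ) • Dmat L i j := by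
  ext m n
  rw [Matrix.mul_apply, Matrix.smul_apply, smul_eq_mul]
  have hstep : ∀ k : Conf L,
      Dmat L i j m k * Dmat L i j k n
        = (fun _ _ => (1:ℂ)) (k i) (k j)
          * ∏ y ∈ (univ.erase i).erase j,
              (fun y v => (if m y = v then (1:ℂ) else 0) * (if v = n y then 1 else 0)) y (k y) := by
    intro k
    show del m k _ * del k n _ = _
    simp only [del, one_mul]
    rw [Finset.prod_mul_distrib]
  have hs := sum_two i j hij (fun _ _ => (1:ℂ))
    (fun y v => (if m y = v then (1:ℂ) else 0) * (if v = n y then 1 else 0))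
  simp_rw [hstep]
  rw [hs]
  have h1 : (∑ _a : Fin 2, ∑ _b : Fin 2, (1:ℂ)) = 4 := by simp; norm_num
  have h2 : ∀ y ∈ (univ.erase i).erase j,
      (∑ v : Fin 2, (if m y = v then (1:ℂ) else 0) * (if v = n y then 1 else 0))
        = if m y = n y then 1 else 0 := fun y _ => sum_dd _ _
  rw [h1, Finset.prod_congr rfl h2]
  rfl

lemma Dmat_posSemidef (i j : Fin L) (hij : i ≠ j) : (Dmat L i j).PosSemidef := by
  have h3 : Dmat L i j = ((1/2 : ℂ) • Dmat L i j)ᴴ * ((1/2 : ℂ) • Dmat L i j) := by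
    rw [Matrix.conjTranspose_smul, Dmat_conjTranspose, Matrix.smul_mul, Matrix.mul_smul,
      Dmat_mul_Dmat i j hij, smul_smul, smul_smul]
    rw [show star (1/2 : ℂ) * (1/2 : ℂ) * 4 = 1 by norm_num, one_smul]
  rw [h3]
  exact Matrix.posSemidef_conjTranspose_mul_self _

lemma hBond_posSemidef (hΔ : 1 < Δ) (x : ℕ) (hx : x + 1 < L) :
    (hBond L Δ x).PosSemidef := by
  have hxL : x < L := by omega
  set i : Fin L := ⟨x, hxL⟩
  set j : Fin L := ⟨x + 1, hx⟩
  have hij : (i.1 : ℕ) + 1 = j.1 := rfl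
  have hne : i ≠ j := by
    intro h
    have := congrArg Fin.val h
    simp [i, j] at this
  set w : Conf L → ℂ := fun m => wv Δ (m i) (m j) with hw
  have hfact : hBond L Δ x = diagonal w * Dmat L i j * (diagonal w)ᴴ := by
    ext m n
    rw [Matrix.diagonal_conjTranspose, Matrix.mul_diagonal, Matrix.diagonal_mul,
      show hBond L Δ x m n = hBond L Δ i.1 m n from rfl, hBond_entry hΔ i j hij m n]
    show wv Δ (m i) (m j) * (starRingEnd ℂ) (wv Δ (n i) (n j)) * del m n _
      = w m * Dmat L i j m n * star (w n)
    rw [hw]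
    show _ = wv Δ (m i) (m j) * del m n _ * star (wv Δ (n i) (n j))
    rw [show star (wv Δ (n i) (n j)) = (starRingEnd ℂ) (wv Δ (n i) (n j)) from rfl]
    ring
  rw [hfact]
  exact (Dmat_posSemidef i j hne).mul_mul_conjTranspose_same (diagonal w)

lemma sum_mulVec' (s : Finset ℕ) (A : ℕ → Matrix (Conf L) (Conf L) ℂ) (v : Conf L → ℂ) :
    (∑ x ∈ s, A x).mulVec v = ∑ x ∈ s, (A x).mulVec v := by
  funext m
  rw [Finset.sum_apply]
  simp only [Matrix.mulVec, dotProduct, Finset.sum_apply, Matrix.sum_apply, Finset.sum_mul]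
  rw [Finset.sum_comm]

end XXZAux

/-! ### The main theorem -/

set_option maxHeartbeats 1000000 in
open XXZAux in
/-- for every `c ≠ 0` and every bond `x`, `h_{x,x+1} φ_c = 0`; consequently
`H_0 φ_c = 0`, and since `H_0 ≥ 0` the lowest eigenvalue of `H_0` is `0` and `φ_c` is
a ground state of `H_0`. -/
theorem kink_annihilated_and_ground_state
    (L : ℕ) (hL : 2 ≤ L) (Δ : ℝ) (hΔ : 1 < Δ) (c : ℂ) (hc : c ≠ 0) :
    (∀ x : ℕ, x < L - 1 → (hBond L Δ x).mulVec (kink L Δ c) = 0) ∧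
    (H0 L Δ).mulVec (kink L Δ c) = 0 ∧
    (H0 L Δ).PosSemidef ∧
    kink L Δ c ≠ 0 ∧
    IsLeast (eigSet (H0 L Δ)) 0 := by
  have part1 : ∀ x : ℕ, x < L - 1 → (hBond L Δ x).mulVec (kink L Δ c) = 0 := by
    intro x hx
    exact hBond_mulVec_kink hΔ c x (by omega)
  have part2 : (H0 L Δ).mulVec (kink L Δ c) = 0 := by
    rw [H0, sum_mulVec']
    apply Finset.sum_eq_zero
    intro x hx
    exact part1 x (Finset.mem_range.mp hx)
  have part3 : (H0 L Δ).PosSemidef := by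
    rw [H0]
    apply Finset.sum_induction (fun x => hBond L Δ x) (fun M => M.PosSemidef)
      (fun a b ha hb => ha.add hb) Matrix.PosSemidef.zero
    intro x hx
    exact hBond_posSemidef hΔ x (by have := Finset.mem_range.mp hx; omega)
  have part4 : kink L Δ c ≠ 0 := by
    intro h
    have h0 : kink L Δ c (fun _ => 0) = 0 := by rw [h]; rfl
    rw [kink_eq] at h0
    exact (Finset.prod_ne_zero_iff.mpr (fun y _ => gfac_ne_zero hΔ c y)) h0
  refine ⟨part1, part2, part3, part4, ⟨kink L Δ c, part4, by rw [part2]; simp⟩, ?_⟩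
  rintro μ ⟨ψ, hψ0, hψ⟩
  have hnn := part3.dotProduct_mulVec_nonneg ψ
  rw [hψ] at hnn
  have hdot : star ψ ⬝ᵥ ((μ:ℂ) • ψ) = (μ:ℂ) * (star ψ ⬝ᵥ ψ) := by
    rw [dotProduct_smul]; rfl
  rw [hdot] at hnn
  set t := star ψ ⬝ᵥ ψ with htdef
  have ht0 : 0 ≤ t := dotProduct_star_self_nonneg ψ
  have htne : t ≠ 0 := by
    intro h
    exact hψ0 (dotProduct_star_self_eq_zero.mp h)
  rw [Complex.le_def] at ht0 hnn
  have htim : t.im = 0 := ht0.2.symm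
  have htre : 0 < t.re := lt_of_le_of_ne (by simpa using ht0.1)
    (fun h => htne (Complex.ext h.symm htim))
  have hre : 0 ≤ ((μ:ℂ) * t).re := by simpa using hnn.1
  rw [Complex.mul_re, Complex.ofReal_re, Complex.ofReal_im, zero_mul, sub_zero] at hre
  nlinarith
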